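/- For every integer d ≥ 1, every index k ∈ {1,…,d}, and every pair of states (p₋,u₋), (p₊,u₊) with p₋ > 0, p₊ > 0 and u₋, u₊ ∈ ℝ^d, the numerical flux F̃_k satisfies the Tadmor entropy-conservation condition ⟦ω⟧ · F̃_k = ⟦ψ_k⟧, i.e. Σ_{α=1}^{d+1} (ω_α(p₊,u₊) − ω_α(p₋,u₋)) F̃_k^{(α)} = ψ_k(p₊,u₊) − ψ_k(p₋,u₋), where ψ_k(p,u) = −(1/4) p^{3/4} u_k is the flux potential. -/

import Mathlib

open Real Finset

/-- Entropy variables (main field) of the ultra-relativistic Euler equations: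
`ω_i = -(1/4) u_i p^{-1/4}` for `i = 1,…,d` and `ω_{d+1} = (1/4) p^{-1/4} √(1+|u|²)`. -/
noncomputable def entropyVars (d : ℕ) (p : ℝ) (u : Fin d → ℝ) : Fin (d + 1) → ℝ :=
  Fin.snoc (fun i => -(1 / 4) * u i * p ^ (-(1 / 4) : ℝ))
    ((1 / 4) * p ^ (-(1 / 4) : ℝ) * Real.sqrt (1 + ∑ j, u j ^ 2))

/-- Entropy-conservative numerical two-point flux `F̃_k` of Theorem 3.1. -/
noncomputable def numFlux (d : ℕ) (k : Fin d) (pm : ℝ) (um : Fin d → ℝ)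
    (pp : ℝ) (up : Fin d → ℝ) : Fin (d + 1) → ℝ :=
  Fin.snoc
    (fun i => 2 * (pm * Real.sqrt pp + pp * Real.sqrt pm) *
        ((up i * pp ^ (-(1 / 4) : ℝ) + um i * pm ^ (-(1 / 4) : ℝ)) / 2) *
        ((up k * pp ^ (-(1 / 4) : ℝ) + um k * pm ^ (-(1 / 4) : ℝ)) / 2) +
      ((pp + pm) / 2) * (if i = k then 1 else 0))
    (2 * (pm * Real.sqrt pp + pp * Real.sqrt pm) *
      ((pp ^ (-(1 / 4) : ℝ) * Real.sqrt (1 + ∑ j, up j ^ 2) +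
        pm ^ (-(1 / 4) : ℝ) * Real.sqrt (1 + ∑ j, um j ^ 2)) / 2) *
      ((up k * pp ^ (-(1 / 4) : ℝ) + um k * pm ^ (-(1 / 4) : ℝ)) / 2))

/-- Flux potential `ψ_k(p,u) = -(1/4) p^{3/4} u_k`. -/
noncomputable def fluxPotential (d : ℕ) (k : Fin d) (p : ℝ) (u : Fin d → ℝ) : ℝ :=
  -(1 / 4) * p ^ ((3 : ℝ) / 4) * u k

/-- Tadmor's entropy-conservation condition `⟦ω⟧ ⋅ F̃_k = ⟦ψ_k⟧` for the
entropy-conservative numerical flux of the ultra-relativistic Euler equations. -/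
theorem numFlux_entropy_conservative (d : ℕ) (hd : 1 ≤ d) (k : Fin d)
    (pm pp : ℝ) (hpm : 0 < pm) (hpp : 0 < pp) (um up : Fin d → ℝ) :
    ∑ α : Fin (d + 1),
        (entropyVars d pp up α - entropyVars d pm um α) * numFlux d k pm um pp up α =
      fluxPotential d k pp up - fluxPotential d k pm um := by
  classical
  have hra : pp ^ (-(1/4) : ℝ) = (pp ^ ((1:ℝ)/4))⁻¹ := by
    rw [← Real.rpow_neg hpp.le]
  have hsa : pm ^ (-(1/4) : ℝ) = (pm ^ ((1:ℝ)/4))⁻¹ := by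
    rw [← Real.rpow_neg hpm.le]
  have hsqp : Real.sqrt pp = (pp ^ ((1:ℝ)/4)) ^ 2 := by
    rw [← Real.rpow_natCast (pp ^ ((1:ℝ)/4)) 2, ← Real.rpow_mul hpp.le,
      Real.sqrt_eq_rpow]; norm_num
  have hsqm : Real.sqrt pm = (pm ^ ((1:ℝ)/4)) ^ 2 := by
    rw [← Real.rpow_natCast (pm ^ ((1:ℝ)/4)) 2, ← Real.rpow_mul hpm.le,
      Real.sqrt_eq_rpow]; norm_num
  have h34p : pp ^ ((3:ℝ)/4) = (pp ^ ((1:ℝ)/4)) ^ 3 := by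
    rw [← Real.rpow_natCast (pp ^ ((1:ℝ)/4)) 3, ← Real.rpow_mul hpp.le]; norm_num
  have h34m : pm ^ ((3:ℝ)/4) = (pm ^ ((1:ℝ)/4)) ^ 3 := by
    rw [← Real.rpow_natCast (pm ^ ((1:ℝ)/4)) 3, ← Real.rpow_mul hpm.le]; norm_num
  have hp4 : pp = (pp ^ ((1:ℝ)/4)) ^ 4 := by
    rw [← Real.rpow_natCast (pp ^ ((1:ℝ)/4)) 4, ← Real.rpow_mul hpp.le]
    norm_num
  have hm4 : pm = (pm ^ ((1:ℝ)/4)) ^ 4 := by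
    rw [← Real.rpow_natCast (pm ^ ((1:ℝ)/4)) 4, ← Real.rpow_mul hpm.le]
    norm_num
  have hr : (0:ℝ) < pp ^ ((1:ℝ)/4) := Real.rpow_pos_of_pos hpp _
  have hs : (0:ℝ) < pm ^ ((1:ℝ)/4) := Real.rpow_pos_of_pos hpm _
  set r := pp ^ ((1:ℝ)/4) with hrdef
  set s := pm ^ ((1:ℝ)/4) with hsdef
  set A := ∑ j, up j ^ 2 with hAdef
  set B := ∑ j, um j ^ 2 with hBdef
  have hA0 : (0:ℝ) ≤ A := by positivity
  have hB0 : (0:ℝ) ≤ B := by positivity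
  set SP := Real.sqrt (1 + A) with hSPdef
  set SM := Real.sqrt (1 + B) with hSMdef
  have hSP : SP ^ 2 = 1 + A := Real.sq_sqrt (by linarith)
  have hSM : SM ^ 2 = 1 + B := Real.sq_sqrt (by linarith)
  rw [Fin.sum_univ_castSucc]
  simp only [entropyVars, numFlux, fluxPotential, Fin.snoc_castSucc, Fin.snoc_last]
  rw [hra, hsa, hsqp, hsqm, h34p, h34m]
  have key : ∀ i : Fin d,
      (-(1 / 4) * up i * r⁻¹ - -(1 / 4) * um i * s⁻¹) *
          (2 * (pm * r ^ 2 + pp * s ^ 2) * ((up i * r⁻¹ + um i * s⁻¹) / 2) *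
              ((up k * r⁻¹ + um k * s⁻¹) / 2) +
            (pp + pm) / 2 * if i = k then 1 else 0) =
        (-(1 / 4) * (pm * r ^ 2 + pp * s ^ 2) * ((up k * r⁻¹ + um k * s⁻¹) / 2) * r⁻¹ ^ 2) *
            up i ^ 2 +
          ((1 / 4) * (pm * r ^ 2 + pp * s ^ 2) * ((up k * r⁻¹ + um k * s⁻¹) / 2) * s⁻¹ ^ 2) *
            um i ^ 2 +
          (if i = k then
            (-(1 / 4) * up i * r⁻¹ - -(1 / 4) * um i * s⁻¹) * ((pp + pm) / 2) else 0) := by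
    intro i
    by_cases h : i = k <;> simp [h] <;> ring
  rw [Finset.sum_congr rfl (fun i _ => key i), Finset.sum_add_distrib,
    Finset.sum_add_distrib, ← Finset.mul_sum, ← Finset.mul_sum,
    Finset.sum_ite_eq' Finset.univ k]
  simp only [Finset.mem_univ, if_true, ← hAdef, ← hBdef]
  rw [hp4, hm4]
  have hA' : A = SP ^ 2 - 1 := by linarith
  have hB' : B = SM ^ 2 - 1 := by linarith
  rw [hA', hB']
  field_simp
  have e1 : √(1 + (SP ^ 2 - 1)) = SP := by rw [← hA', hSPdef]
  have e2 : √(1 + (SM ^ 2 - 1)) = SM := by rw [← hB', hSMdef]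
  rw [e1, e2]
  ring
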